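/- Let P be a poset, X ⊆ P, and A₁, A₂ finite non-empty subsets of X with connected components D₁ of st(A₁) and D₂ of st(A₂). If C₀ is a connected subposet contained in D₁ ∩ D₂, then there is a connected component D₃ of st(A₁ ∪ A₂) with C₀ ⊆ D₃ ⊆ D₁ ∩ D₂. Consequently, the family {Γ(P,X)_{≤D} | D ∈ Γ_f(P,X)} is a basis-like open cover of Γ(P,X). -/

import Mathlib

/-- The star of an element: all elements comparable to `a`. -/
def starOf {α : Type*} [PartialOrder α] (a : α) : Set α := {x | x ≤ a ∨ a ≤ x}

/-- The star of a subset: elements comparable to every element of `A`. -/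
def starSetOf {α : Type*} [PartialOrder α] (A : Set α) : Set α := ⋂ a ∈ A, starOf a

/-- A subset is astral if it is contained in the star of some element. -/
def IsAstral {α : Type*} [PartialOrder α] (A : Set α) : Prop := ∃ x : α, A ⊆ starOf x

/-- One step of the comparability relation inside a subposet `S`. -/
def CompStep {α : Type*} [PartialOrder α] (S : Set α) (x y : α) : Prop :=
  x ∈ S ∧ y ∈ S ∧ (x ≤ y ∨ y ≤ x)

/-- `x` and `y` are connected inside the subposet `S`. -/
def ConnIn {α : Type*} [PartialOrder α] (S : Set α) (x y : α) : Prop :=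
  Relation.ReflTransGen (CompStep S) x y

/-- A subposet is connected (as a subposet, via comparability). -/
def IsConnSub {α : Type*} [PartialOrder α] (S : Set α) : Prop :=
  S.Nonempty ∧ ∀ x ∈ S, ∀ y ∈ S, ConnIn S x y

/-- The connected component of `x` in the subposet `S`. -/
def compOf {α : Type*} [PartialOrder α] (S : Set α) (x : α) : Set α :=
  {y | y ∈ S ∧ ConnIn S x y}

/-- `C` is a connected component of the subposet `S`. -/
def IsCompOf {α : Type*} [PartialOrder α] (S C : Set α) : Prop :=
  ∃ x ∈ S, C = compOf S x

/-- The crosscut poset `Γ(P,X)`: connected components of the nonempty `st(A)`, `∅ ≠ A ⊆ X`. -/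
def crosscutPoset {α : Type*} [PartialOrder α] (X : Set α) : Set (Set α) :=
  {C | ∃ A : Set α, A.Nonempty ∧ A ⊆ X ∧ IsCompOf (starSetOf A) C}

/-- The subposet `Γ_f(P,X)` coming from finite subsets `A ⊆ X`. -/
def crosscutPosetF {α : Type*} [PartialOrder α] (X : Set α) : Set (Set α) :=
  {C | ∃ A : Set α, A.Nonempty ∧ A.Finite ∧ A ⊆ X ∧ IsCompOf (starSetOf A) C}

/-- `X` is a cutset: every finite chain extends to a chain by an element of `X`. -/
def IsCutset {α : Type*} [PartialOrder α] (X : Set α) : Prop :=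
  ∀ σ : Set α, σ.Finite → IsChain (· ≤ ·) σ → ∃ a ∈ X, IsChain (· ≤ ·) (insert a σ)

/-- A subset `X` is coherent: every finite nonempty bounded subset of `X` has a meet or a join. -/
def IsCoherent {α : Type*} [PartialOrder α] (X : Set α) : Prop :=
  ∀ A ⊆ X, A.Finite → A.Nonempty → (BddAbove A ∨ BddBelow A) →
    (∃ z, IsGLB A z) ∨ (∃ z, IsLUB A z)

/-- The simplices of the crosscut complex `Γ_C(P,X)`: nonempty finite astral subsets of `X`. -/
def IsCCSimplex {α : Type*} [PartialOrder α] (X σ : Set α) : Prop :=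
  σ ⊆ X ∧ σ.Finite ∧ σ.Nonempty ∧ IsAstral σ

/-- `I_X(D) = {x ∈ X | D ⊆ st(x)}`. -/
def astralIdx {α : Type*} [PartialOrder α] (X D : Set α) : Set α :=
  {x ∈ X | D ⊆ starOf x}

/-- The set of maximal elements of a poset. -/
def mxlSet (α : Type*) [PartialOrder α] : Set α := {a | ∀ b, a ≤ b → b = a}

/-- The set of minimal elements of a poset. -/
def mnlSet (α : Type*) [PartialOrder α] : Set α := {a | ∀ b, b ≤ a → b = a}

/-- Type synonym carrying the Alexandroff topology (down-sets are open) of a preorder. -/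
def AlexSp (β : Type*) := β

instance {β : Type*} [Preorder β] : Preorder (AlexSp β) := inferInstanceAs (Preorder β)
instance {β : Type*} [PartialOrder β] : PartialOrder (AlexSp β) :=
  inferInstanceAs (PartialOrder β)

instance {β : Type*} [Preorder β] : TopologicalSpace (AlexSp β) where
  IsOpen U := IsLowerSet U
  isOpen_univ := isLowerSet_univ
  isOpen_inter _ _ h₁ h₂ := h₁.inter h₂
  isOpen_sUnion _ h := isLowerSet_sUnion h


section Aux
variable {α : Type*} [PartialOrder α]

lemma connIn_mono {S T : Set α} (h : S ⊆ T) {x y : α} (hxy : ConnIn S x y) :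
    ConnIn T x y :=
  Relation.ReflTransGen.mono (r := CompStep S) (p := CompStep T)
    (fun a b ⟨ha, hb, hc⟩ => ⟨h ha, h hb, hc⟩) x y hxy

lemma connIn_symm {S : Set α} {x y : α} (hxy : ConnIn S x y) : ConnIn S y x := by
  refine @Std.Symm.symm _ _ (@Relation.ReflTransGen.stdSymm _ (CompStep S) ⟨?_⟩) _ _ hxy
  intro a b ⟨ha, hb, hc⟩; exact ⟨hb, ha, hc.symm⟩

lemma starSetOf_union (A B : Set α) :
    starSetOf (A ∪ B) = starSetOf A ∩ starSetOf B := Set.biInter_union A B starOf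

lemma compOf_subset {S : Set α} {x : α} : compOf S x ⊆ S := fun _ h => h.1

lemma mem_compOf_self {S : Set α} {x : α} (hx : x ∈ S) : x ∈ compOf S x :=
  ⟨hx, Relation.ReflTransGen.refl⟩

lemma connIn_compOf {S : Set α} {x y : α} (hxy : ConnIn S x y) :
    ConnIn (compOf S x) x y := by
  induction hxy with
  | refl => exact Relation.ReflTransGen.refl
  | tail hb hbc ih =>
      rename_i b c _
      refine ih.tail ⟨⟨hbc.1, ?_⟩, ⟨hbc.2.1, ?_⟩, hbc.2.2⟩
      · exact hb
      · exact hb.tail hbc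

lemma isConnSub_compOf {S : Set α} {x : α} (hx : x ∈ S) : IsConnSub (compOf S x) := by
  refine ⟨⟨x, mem_compOf_self hx⟩, fun a ha b hb => ?_⟩
  exact (connIn_symm (connIn_compOf ha.2)).trans (connIn_compOf hb.2)

lemma isConnSub_of_isCompOf {S C : Set α} (h : IsCompOf S C) : IsConnSub C := by
  obtain ⟨x, hx, rfl⟩ := h; exact isConnSub_compOf hx

/-- Key refinement lemma. -/
lemma key {A₁ A₂ D₁ D₂ C₀ : Set α}
    (h₁ : IsCompOf (starSetOf A₁) D₁) (h₂ : IsCompOf (starSetOf A₂) D₂)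
    (hC : IsConnSub C₀) (hsub : C₀ ⊆ D₁ ∩ D₂) :
    ∃ D₃, IsCompOf (starSetOf (A₁ ∪ A₂)) D₃ ∧ C₀ ⊆ D₃ ∧ D₃ ⊆ D₁ ∩ D₂ := by
  obtain ⟨x₁, hx₁, rfl⟩ := h₁
  obtain ⟨x₂, hx₂, rfl⟩ := h₂
  obtain ⟨x₀, hx₀⟩ := hC.1
  have hst : starSetOf (A₁ ∪ A₂) = starSetOf A₁ ∩ starSetOf A₂ := starSetOf_union A₁ A₂
  have hx₀₁ := (hsub hx₀).1
  have hx₀₂ := (hsub hx₀).2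
  have hx₀S : x₀ ∈ starSetOf (A₁ ∪ A₂) := by rw [hst]; exact ⟨hx₀₁.1, hx₀₂.1⟩
  have hCsubS : C₀ ⊆ starSetOf (A₁ ∪ A₂) := by
    rw [hst]; exact fun y hy => ⟨(hsub hy).1.1, (hsub hy).2.1⟩
  refine ⟨compOf (starSetOf (A₁ ∪ A₂)) x₀, ⟨x₀, hx₀S, rfl⟩, ?_, ?_⟩
  · intro y hy
    exact ⟨hCsubS hy, connIn_mono hCsubS (hC.2 x₀ hx₀ y hy)⟩
  · rintro y ⟨hyS, hconn⟩
    rw [hst] at hyS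
    constructor
    · exact ⟨hyS.1, hx₀₁.2.trans (connIn_mono (by rw [hst]; exact Set.inter_subset_left) hconn)⟩
    · exact ⟨hyS.2, hx₀₂.2.trans (connIn_mono (by rw [hst]; exact Set.inter_subset_right) hconn)⟩

end Aux

/-- Components over finite unions, and the family `{Γ(P,X)_{≤D} | D ∈ Γ_f(P,X)}` is a
basis-like open cover of `Γ(P,X)`. -/
theorem stmt_19 {α : Type*} [PartialOrder α] {X : Set α} :
    (∀ A₁ A₂ D₁ D₂ C₀ : Set α,
        A₁ ⊆ X → A₁.Finite → A₁.Nonempty → A₂ ⊆ X → A₂.Finite → A₂.Nonempty →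
        IsCompOf (starSetOf A₁) D₁ → IsCompOf (starSetOf A₂) D₂ →
        IsConnSub C₀ → C₀ ⊆ D₁ ∩ D₂ →
        ∃ D₃, IsCompOf (starSetOf (A₁ ∪ A₂)) D₃ ∧ C₀ ⊆ D₃ ∧ D₃ ⊆ D₁ ∩ D₂) ∧
      (∀ C ∈ crosscutPoset X, ∃ D ∈ crosscutPosetF X, C ⊆ D) ∧
      (∀ D₁ ∈ crosscutPosetF X, ∀ D₂ ∈ crosscutPosetF X, ∀ C ∈ crosscutPoset X,
        C ⊆ D₁ → C ⊆ D₂ →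
        ∃ D₃ ∈ crosscutPosetF X, C ⊆ D₃ ∧
          ∀ C' ∈ crosscutPoset X, C' ⊆ D₃ → C' ⊆ D₁ ∧ C' ⊆ D₂) := by
  refine ⟨fun A₁ A₂ D₁ D₂ C₀ _ _ _ _ _ _ h₁ h₂ hC hsub => key h₁ h₂ hC hsub, ?_, ?_⟩
  · rintro C ⟨A, ⟨a, ha⟩, hAX, x, hxS, rfl⟩
    have hss : starSetOf A ⊆ starSetOf {a} := fun z hz => by
      simp only [starSetOf, Set.mem_iInter, Set.mem_singleton_iff] at hz ⊢
      rintro b rfl; exact hz _ ha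
    refine ⟨compOf (starSetOf {a}) x, ⟨{a}, ⟨a, rfl⟩, Set.finite_singleton a,
      Set.singleton_subset_iff.mpr (hAX ha), x, hss hxS, rfl⟩, ?_⟩
    rintro y ⟨hy, hconn⟩
    exact ⟨hss hy, connIn_mono hss hconn⟩
  · rintro D₁ ⟨A₁, hA₁ne, hA₁f, hA₁X, hD₁⟩ D₂ ⟨A₂, hA₂ne, hA₂f, hA₂X, hD₂⟩ C hC hCD₁ hCD₂
    have hconn : IsConnSub C := by
      obtain ⟨A, _, _, h⟩ := hC; exact isConnSub_of_isCompOf h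
    obtain ⟨D₃, hD₃, hCD₃, hD₃sub⟩ := key hD₁ hD₂ hconn (Set.subset_inter hCD₁ hCD₂)
    refine ⟨D₃, ⟨A₁ ∪ A₂, hA₁ne.mono Set.subset_union_left, hA₁f.union hA₂f,
      Set.union_subset hA₁X hA₂X, hD₃⟩, hCD₃, fun C' _ hC'D₃ => ?_⟩
    exact ⟨hC'D₃.trans (hD₃sub.trans Set.inter_subset_left),
           hC'D₃.trans (hD₃sub.trans Set.inter_subset_right)⟩
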